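/- arXiv:2312.06906 — 2 statements merged into one kernel-verified Lean document; each statement's English description precedes it below -/
import Mathlib

section
/- For all u, v ∈ {1,…,m} and all t ∈ ℝ, the absolute difference of moduli satisfies | |U_L(X∨Y,t)_{u,v}| − |U_L(X,t)_{u,v}| | ≤ 2/m. -/
set_option maxHeartbeats 2000000


open Matrix Complex
open scoped Nat

/-- Transition matrix `exp(itM)` of the continuous quantum walk whose Hamiltonian is the
real symmetric matrix `M` (the matrix exponential is taken over `ℂ`). -/
noncomputable def transU {N : Type*} [Fintype N] [DecidableEq N]
    (M : Matrix N N ℝ) (t : ℝ) : Matrix N N ℂ :=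
  NormedSpace.exp ((Complex.I * (t : ℂ)) • M.map (fun x : ℝ => (x : ℂ)))

/-- Laplacian matrix of the join `X ∨ Y` of two weighted graphs with Laplacian
matrices `LX` and `LY`. -/
noncomputable def joinL (m n : ℕ) (LX : Matrix (Fin m) (Fin m) ℝ)
    (LY : Matrix (Fin n) (Fin n) ℝ) :
    Matrix (Fin m ⊕ Fin n) (Fin m ⊕ Fin n) ℝ :=
  Matrix.fromBlocks (LX + (n : ℝ) • (1 : Matrix (Fin m) (Fin m) ℝ))
    (-(Matrix.of fun _ _ => (1 : ℝ)))
    (-(Matrix.of fun _ _ => (1 : ℝ)))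
    (LY + (m : ℝ) • (1 : Matrix (Fin n) (Fin n) ℝ))

/-- Adjacency matrix of the join `X ∨ Y` of two weighted graphs with adjacency
matrices `AX` and `AY`. -/
noncomputable def joinA (m n : ℕ) (AX : Matrix (Fin m) (Fin m) ℝ)
    (AY : Matrix (Fin n) (Fin n) ℝ) :
    Matrix (Fin m ⊕ Fin n) (Fin m ⊕ Fin n) ℝ :=
  Matrix.fromBlocks AX (Matrix.of fun _ _ => (1 : ℝ))
    (Matrix.of fun _ _ => (1 : ℝ)) AY

/-- `lam` is an eigenvalue of the matrix `M`. -/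
def IsEigenvalue {N : Type*} [Fintype N] (M : Matrix N N ℝ) (lam : ℝ) : Prop :=
  ∃ w : N → ℝ, w ≠ 0 ∧ M.mulVec w = lam • w

/-- The eigenvalue support `σ_u(M)` of the vertex `u`: all eigenvalues `lam` of `M` having
an eigenvector `w` with `w u ≠ 0`. -/
def eigSupport {N : Type*} [Fintype N] (M : Matrix N N ℝ) (u : N) : Set ℝ :=
  {lam | ∃ w : N → ℝ, w ≠ 0 ∧ M.mulVec w = lam • w ∧ w u ≠ 0}

/-- Vertices `u` and `v` are strongly cospectral with respect to `M`: for each eigenvalue,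
either all eigenvectors have equal `u`,`v` entries, or all have opposite `u`,`v` entries. -/
def StronglyCospectral {N : Type*} [Fintype N] (M : Matrix N N ℝ) (u v : N) : Prop :=
  ∀ lam : ℝ, IsEigenvalue M lam →
    (∀ w : N → ℝ, M.mulVec w = lam • w → w u = w v) ∨
    (∀ w : N → ℝ, M.mulVec w = lam • w → w u = -(w v))

/-- `σ_{uv}^-(M)`: eigenvalues in the support of `u` all of whose eigenvectors `w`
satisfy `w u = - w v`. -/
def sigmaMinus {N : Type*} [Fintype N] (M : Matrix N N ℝ) (u v : N) : Set ℝ :=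
  {lam | lam ∈ eigSupport M u ∧ ∀ w : N → ℝ, M.mulVec w = lam • w → w u = -(w v)}

/-- The vertex `u` is periodic with respect to `M`. -/
noncomputable def PeriodicAt {N : Type*} [Fintype N] [DecidableEq N]
    (M : Matrix N N ℝ) (u : N) : Prop :=
  ∃ τ : ℝ, 0 < τ ∧ ‖transU M τ u u‖ = 1

/-- Perfect state transfer occurs between vertices `u` and `v` with respect to `M`. -/
noncomputable def HasPST {N : Type*} [Fintype N] [DecidableEq N]
    (M : Matrix N N ℝ) (u v : N) : Prop :=
  ∃ τ : ℝ, 0 < τ ∧ ‖transU M τ u v‖ = 1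

section helpers
variable {N : Type*} [Fintype N] [DecidableEq N]

lemma exp_mul_eq_of_mul_eq_zero (M A : Matrix N N ℂ) (h : M * A = 0) :
    NormedSpace.exp M * A = A := by
  letI : SeminormedRing (Matrix N N ℂ) := Matrix.linftyOpSemiNormedRing
  letI : NormedRing (Matrix N N ℂ) := Matrix.linftyOpNormedRing
  letI : NormedAlgebra ℂ (Matrix N N ℂ) := Matrix.linftyOpNormedAlgebra
  have hsum : Summable fun k : ℕ => ((k ! : ℂ))⁻¹ • M ^ k :=
    NormedSpace.expSeries_summable' (𝕂 := ℂ) M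
  rw [NormedSpace.exp_eq_tsum ℂ, ← hsum.tsum_mul_right A]
  rw [tsum_eq_single 0]
  · simp
  · intro k hk
    obtain ⟨j, rfl⟩ := Nat.exists_eq_succ_of_ne_zero hk
    rw [smul_mul_assoc, pow_succ, mul_assoc, h, mul_zero, smul_zero]

lemma exp_smul_idem (a : ℂ) (Q : Matrix N N ℂ) (hQ : Q * Q = Q) :
    NormedSpace.exp (a • Q) = 1 + (Complex.exp a - 1) • Q := by
  letI : SeminormedRing (Matrix N N ℂ) := Matrix.linftyOpSemiNormedRing
  letI : NormedRing (Matrix N N ℂ) := Matrix.linftyOpNormedRing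
  letI : NormedAlgebra ℂ (Matrix N N ℂ) := Matrix.linftyOpNormedAlgebra
  have hQpow : ∀ k : ℕ, Q ^ (k + 1) = Q := by
    intro k
    induction k with
    | zero => simp
    | succ k ih => rw [pow_succ, ih, hQ]
  have hsum : Summable fun k : ℕ => ((k ! : ℂ))⁻¹ • (a • Q) ^ k :=
    NormedSpace.expSeries_summable' (𝕂 := ℂ) (a • Q)
  have hssum : Summable fun k : ℕ => ((k ! : ℂ))⁻¹ • a ^ k :=
    NormedSpace.expSeries_summable' (𝕂 := ℂ) a
  have hssum1 : Summable fun k : ℕ => (((k + 1)! : ℂ))⁻¹ • a ^ (k + 1) :=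
    (summable_nat_add_iff 1).mpr hssum
  have hscal : (∑' k : ℕ, (((k + 1)! : ℂ))⁻¹ • a ^ (k + 1)) = Complex.exp a - 1 := by
    have h1 : Complex.exp a = ∑' k : ℕ, ((k ! : ℂ))⁻¹ • a ^ k := by
      rw [Complex.exp_eq_exp_ℂ, NormedSpace.exp_eq_tsum ℂ]
    rw [Summable.tsum_eq_zero_add hssum] at h1
    simp only [pow_zero, Nat.factorial_zero, Nat.cast_one, inv_one, smul_eq_mul, mul_one] at h1
    rw [h1, add_sub_cancel_left]
    simp [smul_eq_mul]
  rw [NormedSpace.exp_eq_tsum ℂ]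
  show (∑' k : ℕ, ((k ! : ℂ))⁻¹ • (a • Q) ^ k) = _
  rw [Summable.tsum_eq_zero_add hsum]
  simp only [pow_zero, Nat.factorial_zero, Nat.cast_one, inv_one, one_smul]
  congr 1
  have hterm : ∀ k : ℕ, (((k + 1)! : ℂ))⁻¹ • (a • Q) ^ (k + 1)
      = ((((k + 1)! : ℂ))⁻¹ • a ^ (k + 1)) • Q := by
    intro k
    rw [smul_pow, hQpow, smul_smul, smul_eq_mul]
  calc (∑' k : ℕ, (((k + 1)! : ℂ))⁻¹ • (a • Q) ^ (k + 1))
      = ∑' k : ℕ, ((((k + 1)! : ℂ))⁻¹ • a ^ (k + 1)) • Q := by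
        exact tsum_congr hterm
    _ = (∑' k : ℕ, (((k + 1)! : ℂ))⁻¹ • a ^ (k + 1)) • Q := Summable.tsum_smul_const hssum1 Q
    _ = (Complex.exp a - 1) • Q := by rw [hscal]

end helpers

noncomputable def blockDiagHom (m n : ℕ) :
    (Matrix (Fin m) (Fin m) ℂ × Matrix (Fin n) (Fin n) ℂ) →ₐ[ℂ]
      Matrix (Fin m ⊕ Fin n) (Fin m ⊕ Fin n) ℂ where
  toFun p := Matrix.fromBlocks p.1 0 0 p.2
  map_one' := Matrix.fromBlocks_one
  map_mul' p q := by
    rw [Matrix.fromBlocks_multiply]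
    simp
  map_zero' := Matrix.fromBlocks_zero
  map_add' p q := by
    rw [Matrix.fromBlocks_add]
    simp
  commutes' c := by
    simp only [Algebra.algebraMap_eq_smul_one]
    rw [← Matrix.fromBlocks_one, Matrix.fromBlocks_smul]
    simp

lemma exp_fromBlocks {m n : ℕ} (A : Matrix (Fin m) (Fin m) ℂ) (D : Matrix (Fin n) (Fin n) ℂ) :
    NormedSpace.exp (Matrix.fromBlocks A 0 0 D)
      = Matrix.fromBlocks (NormedSpace.exp A) 0 0 (NormedSpace.exp D) := by
  letI : SeminormedRing (Matrix (Fin m) (Fin m) ℂ) := Matrix.linftyOpSemiNormedRing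
  letI : NormedRing (Matrix (Fin m) (Fin m) ℂ) := Matrix.linftyOpNormedRing
  letI : NormedAlgebra ℂ (Matrix (Fin m) (Fin m) ℂ) := Matrix.linftyOpNormedAlgebra
  letI : SeminormedRing (Matrix (Fin n) (Fin n) ℂ) := Matrix.linftyOpSemiNormedRing
  letI : NormedRing (Matrix (Fin n) (Fin n) ℂ) := Matrix.linftyOpNormedRing
  letI : NormedAlgebra ℂ (Matrix (Fin n) (Fin n) ℂ) := Matrix.linftyOpNormedAlgebra
  letI : SeminormedRing (Matrix (Fin m ⊕ Fin n) (Fin m ⊕ Fin n) ℂ) :=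
    Matrix.linftyOpSemiNormedRing
  letI : NormedRing (Matrix (Fin m ⊕ Fin n) (Fin m ⊕ Fin n) ℂ) := Matrix.linftyOpNormedRing
  letI : NormedAlgebra ℂ (Matrix (Fin m ⊕ Fin n) (Fin m ⊕ Fin n) ℂ) :=
    Matrix.linftyOpNormedAlgebra
  letI : NormedAlgebra ℚ (Matrix (Fin m) (Fin m) ℂ) :=
    { norm_smul_le := fun q x => by
        rw [← algebraMap_smul ℂ q x]; exact (norm_smul _ _).le.trans_eq (by simp [← Rat.norm_cast_real, Real.norm_eq_abs]) }
  letI : NormedAlgebra ℚ (Matrix (Fin n) (Fin n) ℂ) :=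
    { norm_smul_le := fun q x => by
        rw [← algebraMap_smul ℂ q x]; exact (norm_smul _ _).le.trans_eq (by simp [← Rat.norm_cast_real, Real.norm_eq_abs]) }
  have hcont : Continuous (blockDiagHom m n) := by
    apply continuous_matrix
    rintro (i | i) (j | j)
    · show Continuous fun p : Matrix (Fin m) (Fin m) ℂ × Matrix (Fin n) (Fin n) ℂ => p.1 i j
      exact continuous_fst.matrix_elem i j
    · exact continuous_const
    · exact continuous_const
    · show Continuous fun p : Matrix (Fin m) (Fin m) ℂ × Matrix (Fin n) (Fin n) ℂ => p.2 i j
      exact continuous_snd.matrix_elem i j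
  have h1 := NormedSpace.map_exp (blockDiagHom m n) hcont (A, D)
  have h2 : NormedSpace.exp ((A, D) : Matrix (Fin m) (Fin m) ℂ × Matrix (Fin n) (Fin n) ℂ)
      = (NormedSpace.exp A, NormedSpace.exp D) :=
    Prod.ext (Prod.fst_exp _) (Prod.snd_exp _)
  have : (blockDiagHom m n) (A, D) = Matrix.fromBlocks A 0 0 D := rfl
  rw [this] at h1
  exact h1.symm.trans (congrArg (blockDiagHom m n) h2)

lemma Jmul {p q r : Type*} [Fintype p] [Fintype q] [Fintype r] :
    (Matrix.of fun _ _ => (1 : ℂ) : Matrix p q ℂ) * (Matrix.of fun _ _ => (1 : ℂ) : Matrix q r ℂ)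
      = (Fintype.card q : ℂ) • (Matrix.of fun _ _ => (1 : ℂ) : Matrix p r ℂ) := by
  ext i j
  simp [Matrix.mul_apply]


noncomputable def JJ (p q : Type*) : Matrix p q ℂ := Matrix.of fun _ _ => 1

lemma JJ_mul (p q r : Type*) [Fintype q] :
    (JJ p q) * (JJ q r) = (Fintype.card q : ℂ) • JJ p r := by
  ext i j
  simp [JJ, Matrix.mul_apply]

lemma rowsum_mul_JJ {m : ℕ} {p : Type*} (LX : Matrix (Fin m) (Fin m) ℝ)
    (h : ∀ i, ∑ j, LX i j = 0) :
    (LX.map (fun x : ℝ => (x : ℂ))) * JJ (Fin m) p = 0 := by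
  ext i j
  have := congrArg (fun x : ℝ => (x : ℂ)) (h i)
  push_cast at this
  simpa [JJ, Matrix.mul_apply] using this

lemma JJ_mul_colsum {m : ℕ} {p : Type*} (LX : Matrix (Fin m) (Fin m) ℝ)
    (hs : LX.IsSymm) (h : ∀ i, ∑ j, LX i j = 0) :
    JJ p (Fin m) * (LX.map (fun x : ℝ => (x : ℂ))) = 0 := by
  ext i j
  have h2 : ∀ k, LX k j = LX j k := fun k => by
    conv_lhs => rw [← hs]
    rfl
  have := congrArg (fun x : ℝ => (x : ℂ)) (h j)
  push_cast at this
  simp only [JJ, Matrix.mul_apply, Matrix.map_apply, Matrix.of_apply, one_mul,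
    Matrix.zero_apply]
  rw [Finset.sum_congr rfl (fun k _ => by rw [h2 k])]
  exact this

lemma key (m n : ℕ) (hm : 1 ≤ m) (hn : 1 ≤ n)
    (LX : Matrix (Fin m) (Fin m) ℝ) (LY : Matrix (Fin n) (Fin n) ℝ)
    (hLXsymm : LX.IsSymm) (hLXrow : ∀ i, ∑ j, LX i j = 0)
    (hLYsymm : LY.IsSymm) (hLYrow : ∀ i, ∑ j, LY i j = 0)
    (u v : Fin m) (t : ℝ) :
    transU (joinL m n LX LY) t (Sum.inl u) (Sum.inl v)
      = Complex.exp (Complex.I * t * n) * transU LX t u v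
        + (1 / ((m : ℂ) + n) - Complex.exp (Complex.I * t * n) / m
            + (n : ℂ) * Complex.exp (Complex.I * t * ((m : ℂ) + n)) / (m * ((m : ℂ) + n))) := by
  have hm0 : (m : ℂ) ≠ 0 := Nat.cast_ne_zero.mpr (by omega)
  have hn0 : (n : ℂ) ≠ 0 := Nat.cast_ne_zero.mpr (by omega)
  have hmn0 : (m : ℂ) + n ≠ 0 := by
    have h : ((m + n : ℕ) : ℂ) ≠ 0 := Nat.cast_ne_zero.mpr (by omega)
    push_cast at h
    exact h
  set LX' : Matrix (Fin m) (Fin m) ℂ := LX.map (fun x : ℝ => (x : ℂ)) with hLX'def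
  set LY' : Matrix (Fin n) (Fin n) ℂ := LY.map (fun x : ℝ => (x : ℂ)) with hLY'def
  set B : Matrix (Fin m ⊕ Fin n) (Fin m ⊕ Fin n) ℂ := Matrix.fromBlocks LX' 0 0 LY' with hBdef
  set C : Matrix (Fin m ⊕ Fin n) (Fin m ⊕ Fin n) ℂ :=
    Matrix.fromBlocks ((n : ℂ) • 1) (-JJ (Fin m) (Fin n)) (-JJ (Fin n) (Fin m)) ((m : ℂ) • 1)
    with hCdef
  -- row and column sum facts
  have hXJ : ∀ {p : Type}, LX' * JJ (Fin m) p = 0 := fun {p} => rowsum_mul_JJ LX hLXrow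
  have hYJ : ∀ {p : Type}, LY' * JJ (Fin n) p = 0 := fun {p} => rowsum_mul_JJ LY hLYrow
  have hJX : ∀ {p : Type}, JJ p (Fin m) * LX' = 0 := fun {p} => JJ_mul_colsum LX hLXsymm hLXrow
  have hJY : ∀ {p : Type}, JJ p (Fin n) * LY' = 0 := fun {p} => JJ_mul_colsum LY hLYsymm hLYrow
  -- the Laplacian of the join, over ℂ
  have hmap : (joinL m n LX LY).map (fun x : ℝ => (x : ℂ)) = B + C := by
    rw [hBdef, hCdef]
    ext (i | i) (j | j)
    · by_cases hij : i = j <;>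
        simp [joinL, JJ, Matrix.one_apply, hLX'def, hLY'def, Matrix.map_apply, hij]
    · simp [joinL, JJ, hLX'def, hLY'def, Matrix.map_apply]
    · simp [joinL, JJ, hLX'def, hLY'def, Matrix.map_apply]
    · by_cases hij : i = j <;>
        simp [joinL, JJ, Matrix.one_apply, hLX'def, hLY'def, Matrix.map_apply, hij]
  -- B and C commute
  have hBC : B * C = C * B := by
    rw [hBdef, hCdef, Matrix.fromBlocks_multiply, Matrix.fromBlocks_multiply]
    simp only [Matrix.mul_zero, Matrix.zero_mul, add_zero, zero_add, Matrix.mul_neg,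
      Matrix.neg_mul, Matrix.mul_smul, Matrix.smul_mul, Matrix.mul_one, Matrix.one_mul,
      hXJ, hYJ, hJX, hJY, neg_zero, smul_zero]
  -- the idempotents
  set Q1 : Matrix (Fin m ⊕ Fin n) (Fin m ⊕ Fin n) ℂ :=
    Matrix.fromBlocks (1 - (m : ℂ)⁻¹ • JJ (Fin m) (Fin m)) 0 0 0 with hQ1def
  set Q2 : Matrix (Fin m ⊕ Fin n) (Fin m ⊕ Fin n) ℂ :=
    Matrix.fromBlocks 0 0 0 (1 - (n : ℂ)⁻¹ • JJ (Fin n) (Fin n)) with hQ2def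
  set Q3 : Matrix (Fin m ⊕ Fin n) (Fin m ⊕ Fin n) ℂ :=
    Matrix.fromBlocks (((n : ℂ) / (m * ((m : ℂ) + n))) • JJ (Fin m) (Fin m))
      ((-1 / ((m : ℂ) + n)) • JJ (Fin m) (Fin n))
      ((-1 / ((m : ℂ) + n)) • JJ (Fin n) (Fin m))
      (((m : ℂ) / (n * ((m : ℂ) + n))) • JJ (Fin n) (Fin n)) with hQ3def
  have hQmul : ∀ (P Q : Matrix (Fin m ⊕ Fin n) (Fin m ⊕ Fin n) ℂ), P = Q → P = Q :=
    fun _ _ h => h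
  have hQ1Q1 : Q1 * Q1 = Q1 := by
    rw [hQ1def, Matrix.fromBlocks_multiply]
    simp only [Matrix.sub_mul, Matrix.mul_sub, Matrix.smul_mul, Matrix.mul_smul, Matrix.one_mul,
      Matrix.mul_one, JJ_mul, Fintype.card_fin, smul_smul, Matrix.mul_zero, Matrix.zero_mul,
      add_zero, zero_add, smul_zero, sub_zero]
    rw [Matrix.fromBlocks_inj]
    refine ⟨?_, rfl, rfl, rfl⟩
    match_scalars <;> field_simp <;> ring
  have hQ2Q2 : Q2 * Q2 = Q2 := by
    rw [hQ2def, Matrix.fromBlocks_multiply]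
    simp only [Matrix.sub_mul, Matrix.mul_sub, Matrix.smul_mul, Matrix.mul_smul, Matrix.one_mul,
      Matrix.mul_one, JJ_mul, Fintype.card_fin, smul_smul, Matrix.mul_zero, Matrix.zero_mul,
      add_zero, zero_add, smul_zero, sub_zero]
    rw [Matrix.fromBlocks_inj]
    refine ⟨rfl, rfl, rfl, ?_⟩
    match_scalars <;> field_simp <;> ring
  have hQ3Q3 : Q3 * Q3 = Q3 := by
    rw [hQ3def, Matrix.fromBlocks_multiply]
    simp only [Matrix.sub_mul, Matrix.mul_sub, Matrix.smul_mul, Matrix.mul_smul, Matrix.one_mul,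
      Matrix.mul_one, JJ_mul, Fintype.card_fin, smul_smul, Matrix.mul_zero, Matrix.zero_mul,
      add_zero, zero_add, smul_zero, sub_zero]
    rw [Matrix.fromBlocks_inj]
    refine ⟨?_, ?_, ?_, ?_⟩ <;> (match_scalars <;> (field_simp; ring))
  have hQ1Q2 : Q1 * Q2 = 0 := by
    rw [hQ1def, hQ2def, Matrix.fromBlocks_multiply]
    simp
  have hQ2Q1 : Q2 * Q1 = 0 := by
    rw [hQ1def, hQ2def, Matrix.fromBlocks_multiply]
    simp
  have hQ1Q3 : Q1 * Q3 = 0 := by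
    rw [hQ1def, hQ3def, Matrix.fromBlocks_multiply, ← Matrix.fromBlocks_zero]
    simp only [Matrix.sub_mul, Matrix.mul_sub, Matrix.smul_mul, Matrix.mul_smul, Matrix.one_mul,
      Matrix.mul_one, JJ_mul, Fintype.card_fin, smul_smul, Matrix.mul_zero, Matrix.zero_mul,
      add_zero, zero_add, smul_zero, sub_zero]
    rw [Matrix.fromBlocks_inj]
    refine ⟨?_, ?_, rfl, rfl⟩ <;> (match_scalars <;> (field_simp; try ring))
  have hQ3Q1 : Q3 * Q1 = 0 := by
    rw [hQ1def, hQ3def, Matrix.fromBlocks_multiply, ← Matrix.fromBlocks_zero]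
    simp only [Matrix.sub_mul, Matrix.mul_sub, Matrix.smul_mul, Matrix.mul_smul, Matrix.one_mul,
      Matrix.mul_one, JJ_mul, Fintype.card_fin, smul_smul, Matrix.mul_zero, Matrix.zero_mul,
      add_zero, zero_add, smul_zero, sub_zero]
    rw [Matrix.fromBlocks_inj]
    refine ⟨?_, rfl, ?_, rfl⟩ <;> (match_scalars <;> (field_simp; try ring))
  have hQ2Q3 : Q2 * Q3 = 0 := by
    rw [hQ2def, hQ3def, Matrix.fromBlocks_multiply, ← Matrix.fromBlocks_zero]
    simp only [Matrix.sub_mul, Matrix.mul_sub, Matrix.smul_mul, Matrix.mul_smul, Matrix.one_mul,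
      Matrix.mul_one, JJ_mul, Fintype.card_fin, smul_smul, Matrix.mul_zero, Matrix.zero_mul,
      add_zero, zero_add, smul_zero, sub_zero]
    rw [Matrix.fromBlocks_inj]
    refine ⟨rfl, rfl, ?_, ?_⟩ <;> (match_scalars <;> (field_simp; try ring))
  have hQ3Q2 : Q3 * Q2 = 0 := by
    rw [hQ2def, hQ3def, Matrix.fromBlocks_multiply, ← Matrix.fromBlocks_zero]
    simp only [Matrix.sub_mul, Matrix.mul_sub, Matrix.smul_mul, Matrix.mul_smul, Matrix.one_mul,
      Matrix.mul_one, JJ_mul, Fintype.card_fin, smul_smul, Matrix.mul_zero, Matrix.zero_mul,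
      add_zero, zero_add, smul_zero, sub_zero]
    rw [Matrix.fromBlocks_inj]
    refine ⟨rfl, ?_, rfl, ?_⟩ <;> (match_scalars <;> (field_simp; try ring))
  have hC : C = (n : ℂ) • Q1 + (m : ℂ) • Q2 + ((m : ℂ) + n) • Q3 := by
    rw [hCdef, hQ1def, hQ2def, hQ3def, Matrix.fromBlocks_smul, Matrix.fromBlocks_smul,
      Matrix.fromBlocks_smul, Matrix.fromBlocks_add, Matrix.fromBlocks_add]
    simp only [smul_zero, add_zero, zero_add, smul_smul]
    rw [Matrix.fromBlocks_inj]
    refine ⟨?_, ?_, ?_, ?_⟩ <;> (match_scalars <;> (field_simp; try ring))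
  -- exponentials
  set EX : Matrix (Fin m) (Fin m) ℂ := NormedSpace.exp ((Complex.I * (t : ℂ)) • LX') with hEXdef
  set EY : Matrix (Fin n) (Fin n) ℂ := NormedSpace.exp ((Complex.I * (t : ℂ)) • LY') with hEYdef
  have hexpB : NormedSpace.exp ((Complex.I * (t : ℂ)) • B) = Matrix.fromBlocks EX 0 0 EY := by
    rw [hBdef, Matrix.fromBlocks_smul]
    simp only [smul_zero]
    rw [exp_fromBlocks]
  have hBCc : Commute B C := hBC
  have hcomm : Commute ((Complex.I * (t : ℂ)) • B) ((Complex.I * (t : ℂ)) • C) :=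
    (hBCc.smul_left _).smul_right _
  have hsplit : transU (joinL m n LX LY) t
      = NormedSpace.exp ((Complex.I * (t : ℂ)) • B)
        * NormedSpace.exp ((Complex.I * (t : ℂ)) • C) := by
    rw [transU, hmap, smul_add]
    exact Matrix.exp_add_of_commute _ _ hcomm
  set a1 : ℂ := Complex.I * t * n with ha1def
  set a2 : ℂ := Complex.I * t * m with ha2def
  set a3 : ℂ := Complex.I * t * ((m : ℂ) + n) with ha3def
  set al : ℂ := Complex.exp a1 - 1 with haldef
  set be : ℂ := Complex.exp a2 - 1 with hbedef
  set ga : ℂ := Complex.exp a3 - 1 with hgadef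
  have hc12 : Commute (a1 • Q1) (a2 • Q2) := by
    have h : Commute Q1 Q2 := by unfold Commute SemiconjBy; rw [hQ1Q2, hQ2Q1]
    exact (h.smul_left _).smul_right _
  have hc13 : Commute (a1 • Q1) (a3 • Q3) := by
    have h : Commute Q1 Q3 := by unfold Commute SemiconjBy; rw [hQ1Q3, hQ3Q1]
    exact (h.smul_left _).smul_right _
  have hc23 : Commute (a2 • Q2) (a3 • Q3) := by
    have h : Commute Q2 Q3 := by unfold Commute SemiconjBy; rw [hQ2Q3, hQ3Q2]
    exact (h.smul_left _).smul_right _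
  have hexpC : NormedSpace.exp ((Complex.I * (t : ℂ)) • C)
      = 1 + al • Q1 + be • Q2 + ga • Q3 := by
    have hsm : (Complex.I * (t : ℂ)) • C = a1 • Q1 + (a2 • Q2 + a3 • Q3) := by
      rw [hC, smul_add, smul_add, smul_smul, smul_smul, smul_smul, ha1def, ha2def, ha3def,
        add_assoc]
    rw [hsm, Matrix.exp_add_of_commute _ _ (hc12.add_right hc13),
      Matrix.exp_add_of_commute _ _ hc23,
      exp_smul_idem a1 Q1 hQ1Q1, exp_smul_idem a2 Q2 hQ2Q2, exp_smul_idem a3 Q3 hQ3Q3,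
      ← haldef, ← hbedef, ← hgadef]
    simp only [mul_add, add_mul, Matrix.one_mul, Matrix.mul_one, Matrix.smul_mul,
      Matrix.mul_smul, hQ1Q2, hQ1Q3, hQ2Q3, smul_zero, add_zero]
    try abel
  have hEXJ : EX * JJ (Fin m) (Fin m) = JJ (Fin m) (Fin m) := by
    rw [hEXdef]
    exact exp_mul_eq_of_mul_eq_zero _ _ (by rw [Matrix.smul_mul, hXJ, smul_zero])
  have hTU : transU LX t = EX := rfl
  -- assemble
  rw [hsplit, hexpB, hexpC, hQ1def, hQ2def, hQ3def, ← Matrix.fromBlocks_one,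
    Matrix.fromBlocks_smul, Matrix.fromBlocks_smul, Matrix.fromBlocks_smul,
    Matrix.fromBlocks_add, Matrix.fromBlocks_add, Matrix.fromBlocks_add,
    Matrix.fromBlocks_multiply]
  rw [Matrix.fromBlocks_apply₁₁]
  simp only [Matrix.zero_mul, Matrix.mul_zero, smul_zero, add_zero, zero_add]
  simp only [Matrix.mul_add, Matrix.mul_one, Matrix.mul_sub, Matrix.mul_smul]
  simp only [hEXJ, hTU]
  simp only [Matrix.add_apply, Matrix.smul_apply, Matrix.sub_apply, JJ, Matrix.of_apply,
    smul_eq_mul]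
  rw [haldef, hgadef]
  field_simp
  ring

theorem stmt18 (m n : ℕ) (hm : 1 ≤ m) (hn : 1 ≤ n)
    (LX : Matrix (Fin m) (Fin m) ℝ) (LY : Matrix (Fin n) (Fin n) ℝ)
    (hLXsymm : LX.IsSymm) (hLXrow : ∀ i, ∑ j, LX i j = 0)
    (hLYsymm : LY.IsSymm) (hLYrow : ∀ i, ∑ j, LY i j = 0) :
    ∀ (u v : Fin m) (t : ℝ),
      |‖transU (joinL m n LX LY) t (Sum.inl u) (Sum.inl v)‖
          - ‖transU LX t u v‖| ≤ 2 / m := by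
  intro u v t
  have hmR : (0 : ℝ) < m := by exact_mod_cast hm
  have hnR : (0 : ℝ) < n := by exact_mod_cast hn
  have hmnR : (0 : ℝ) < (m : ℝ) + n := by linarith
  have hk := key m n hm hn LX LY hLXsymm hLXrow hLYsymm hLYrow u v t
  set A : ℂ := transU (joinL m n LX LY) t (Sum.inl u) (Sum.inl v) with hA
  set Bv : ℂ := transU LX t u v with hBv
  set e1 : ℂ := Complex.exp (Complex.I * t * n) with he1
  set e2 : ℂ := Complex.exp (Complex.I * t * ((m : ℂ) + n)) with he2
  have habs1 : ‖e1‖ = 1 := by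
    rw [he1, Complex.norm_exp]
    have : (Complex.I * t * n).re = 0 := by simp
    rw [this, Real.exp_zero]
  have habs2 : ‖e2‖ = 1 := by
    rw [he2, Complex.norm_exp]
    have : (Complex.I * t * ((m : ℂ) + n)).re = 0 := by simp
    rw [this, Real.exp_zero]
  have hBv' : ‖e1 * Bv‖ = ‖Bv‖ := by
    rw [norm_mul, habs1, one_mul]
  have hstep1 : |‖A‖ - ‖Bv‖| ≤ ‖A - e1 * Bv‖ := by
    rw [← hBv']
    exact abs_norm_sub_norm_le A (e1 * Bv)
  have hdiff : A - e1 * Bv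
      = 1 / ((m : ℂ) + n) - e1 / m + (n : ℂ) * e2 / (m * ((m : ℂ) + n)) := by
    rw [hk]; ring
  have habsm : ‖(m : ℂ)‖ = (m : ℝ) := Complex.norm_natCast m
  have habsn : ‖(n : ℂ)‖ = (n : ℝ) := Complex.norm_natCast n
  have habsmn : ‖(m : ℂ) + n‖ = (m : ℝ) + n := by
    have h : ((m : ℂ) + n) = (((m : ℝ) + n : ℝ) : ℂ) := by push_cast; ring
    rw [h, Complex.norm_real, Real.norm_eq_abs, abs_of_pos hmnR]
  have hstep2 : ‖A - e1 * Bv‖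
      ≤ 1 / ((m : ℝ) + n) + 1 / m + n / (m * ((m : ℝ) + n)) := by
    rw [hdiff]
    calc ‖1 / ((m : ℂ) + n) - e1 / m + (n : ℂ) * e2 / (m * ((m : ℂ) + n))‖
        ≤ ‖1 / ((m : ℂ) + n) - e1 / m‖
            + ‖(n : ℂ) * e2 / (m * ((m : ℂ) + n))‖ := norm_add_le _ _
      _ ≤ ‖1 / ((m : ℂ) + n)‖ + ‖e1 / m‖
            + ‖(n : ℂ) * e2 / (m * ((m : ℂ) + n))‖ := by
          have := norm_sub_le (1 / ((m : ℂ) + n)) (e1 / m)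
          linarith
      _ = 1 / ((m : ℝ) + n) + 1 / m + n / (m * ((m : ℝ) + n)) := by
          rw [norm_div, norm_div, norm_div, norm_mul, norm_mul, norm_one, habs1, habs2,
            habsm, habsn, habsmn, mul_one]
  have harith : 1 / ((m : ℝ) + n) + 1 / m + n / (m * ((m : ℝ) + n)) = 2 / m := by
    field_simp
    ring
  calc |‖A‖ - ‖Bv‖| ≤ ‖A - e1 * Bv‖ := hstep1
    _ ≤ 1 / ((m : ℝ) + n) + 1 / m + n / (m * ((m : ℝ) + n)) := hstep2
    _ = 2 / m := harith
end

section
/- For all u, v ∈ {1,…,m} and all t ∈ ℝ, |U_A(X∨Y,t)_{u,v} − U_A(X,t)_{u,v}| ≤ 2/m. Moreover, for τ ∈ ℝ, equality holds at t = τ if and only if e^{iτλ⁺} = e^{iτλ⁻} = −e^{iτk}, in which case U_A(X∨Y,τ)_{u,v} − U_A(X,τ)_{u,v} = −2e^{iτk}/m. -/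
open Matrix Complex

section Aux
open NormedSpace Nat Matrix

section Abstract
variable {A : Type*} [NormedRing A] [NormedAlgebra ℂ A] [CompleteSpace A]

lemma aux_exp_mul_of_mul_eq_zero {a b : A} (h : a * b = 0) : exp a * b = b := by
  rw [exp_eq_tsum ℂ, ← (expSeries_summable' (𝕂 := ℂ) a).tsum_mul_right b]
  have key : ∀ n : ℕ, ((n !⁻¹ : ℂ) • a ^ n) * b = if n = 0 then b else 0 := by
    intro n
    cases n with
    | zero => simp
    | succ p => simp [pow_succ, mul_assoc, h, smul_mul_assoc]
  rw [tsum_congr key, tsum_ite_eq]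

lemma aux_mul_exp_of_mul_eq_zero {a b : A} (h : b * a = 0) : b * exp a = b := by
  rw [exp_eq_tsum ℂ, ← (expSeries_summable' (𝕂 := ℂ) a).tsum_mul_left b]
  have key : ∀ n : ℕ, b * ((n !⁻¹ : ℂ) • a ^ n) = if n = 0 then b else 0 := by
    intro n
    cases n with
    | zero => simp
    | succ p =>
      have hz : b * a ^ (p + 1) = 0 := by rw [_root_.pow_succ', ← mul_assoc, h, zero_mul]
      simp [mul_smul_comm, hz]
  rw [tsum_congr key, tsum_ite_eq]

lemma aux_exp_add_of_mul_eq_zero {a b : A} (h1 : a * b = 0) (h2 : b * a = 0) :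
    exp (a + b) = exp a + exp b - 1 := by
  letI : NormedAlgebra ℚ A := NormedAlgebra.restrictScalars ℚ ℂ A
  have hc : Commute a b := h1.trans h2.symm
  rw [exp_add_of_commute hc]
  conv_lhs => rw [show exp b = ∑' n : ℕ, (n !⁻¹ : ℂ) • b ^ n from congrFun (exp_eq_tsum ℂ) b,
    ← (expSeries_summable' (𝕂 := ℂ) b).tsum_mul_left (exp a)]
  have key : ∀ n : ℕ, exp a * ((n !⁻¹ : ℂ) • b ^ n)
      = (n !⁻¹ : ℂ) • b ^ n + (if n = 0 then exp a - 1 else 0) := by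
    intro n
    cases n with
    | zero => simp
    | succ p =>
      have : exp a * b ^ (p + 1) = b ^ (p + 1) := by
        rw [_root_.pow_succ', ← mul_assoc, aux_exp_mul_of_mul_eq_zero h1]
      simp [mul_smul_comm, this]
  rw [tsum_congr key, Summable.tsum_add (expSeries_summable' (𝕂 := ℂ) b)
    ((hasSum_ite_eq 0 (exp a - 1)).summable), tsum_ite_eq,
    ← congrFun (exp_eq_tsum (𝕂 := ℂ)) b]
  abel

end Abstract

section Idem
variable {A : Type*} [NormedRing A] [NormedAlgebra ℂ A] [CompleteSpace A]

/-- Ring hom `ℂ × ℂ →+* A` attached to an idempotent. -/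
def idemHom (P : A) (hP : P * P = P) : ℂ × ℂ →+* A where
  toFun p := p.1 • P + p.2 • (1 - P)
  map_one' := by simp
  map_mul' p q := by
    have h1 : P * (1 - P) = 0 := by simp [mul_sub, hP]
    have h2 : (1 - P) * P = 0 := by simp [sub_mul, hP]
    have h3 : (1 - P) * (1 - P) = 1 - P := by simp [mul_sub, sub_mul, hP]
    simp only [Prod.fst_mul, Prod.snd_mul, add_mul, mul_add, smul_mul_smul_comm, hP, h1, h2, h3,
      smul_zero, add_zero, zero_add]
  map_zero' := by simp
  map_add' p q := by simp [add_smul]; abel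

lemma exp_smul_idem_s19 (P : A) (hP : P * P = P) (z : ℂ) :
    exp (z • P) = Complex.exp z • P + (1 - P) := by
  letI : NormedAlgebra ℚ A := NormedAlgebra.restrictScalars ℚ ℂ A
  have hc : Continuous (idemHom P hP) := by
    have : (idemHom P hP : ℂ × ℂ → A) = fun p => p.1 • P + p.2 • (1 - P) := rfl
    rw [this]
    fun_prop
  have h0 : z • P = idemHom P hP (z, 0) := by simp [idemHom]
  rw [h0, ← map_exp (idemHom P hP) hc]
  have hexp : exp ((z, 0) : ℂ × ℂ) = (NormedSpace.exp z, NormedSpace.exp (0 : ℂ)) :=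
    Prod.ext (Prod.fst_exp _) (Prod.snd_exp _)
  rw [hexp, NormedSpace.exp_zero, ← Complex.exp_eq_exp_ℂ]
  simp [idemHom]

end Idem

section MatrixWrap
variable {N : Type*} [Fintype N] [DecidableEq N]

lemma mexp_mul {a b : Matrix N N ℂ} (h : a * b = 0) : exp a * b = b := by
  letI : SeminormedRing (Matrix N N ℂ) := Matrix.linftyOpSemiNormedRing
  letI : NormedRing (Matrix N N ℂ) := Matrix.linftyOpNormedRing
  letI : NormedAlgebra ℂ (Matrix N N ℂ) := Matrix.linftyOpNormedAlgebra
  exact aux_exp_mul_of_mul_eq_zero h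

lemma mexp_add {a b : Matrix N N ℂ} (h1 : a * b = 0) (h2 : b * a = 0) :
    exp (a + b) = exp a + exp b - 1 := by
  letI : SeminormedRing (Matrix N N ℂ) := Matrix.linftyOpSemiNormedRing
  letI : NormedRing (Matrix N N ℂ) := Matrix.linftyOpNormedRing
  letI : NormedAlgebra ℂ (Matrix N N ℂ) := Matrix.linftyOpNormedAlgebra
  exact aux_exp_add_of_mul_eq_zero h1 h2

lemma mexp_smul_idem (P : Matrix N N ℂ) (hP : P * P = P) (z : ℂ) :
    exp (z • P) = Complex.exp z • P + (1 - P) := by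
  letI : SeminormedRing (Matrix N N ℂ) := Matrix.linftyOpSemiNormedRing
  letI : NormedRing (Matrix N N ℂ) := Matrix.linftyOpNormedRing
  letI : NormedAlgebra ℂ (Matrix N N ℂ) := Matrix.linftyOpNormedAlgebra
  exact exp_smul_idem_s19 P hP z

end MatrixWrap

section BlockDiag
variable {m n : ℕ}

/-- Block-diagonal embedding as a ring hom. -/
def blockHom (m n : ℕ) :
    Matrix (Fin m) (Fin m) ℂ × Matrix (Fin n) (Fin n) ℂ →+*
      Matrix (Fin m ⊕ Fin n) (Fin m ⊕ Fin n) ℂ where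
  toFun p := Matrix.fromBlocks p.1 0 0 p.2
  map_one' := by simp [← Matrix.fromBlocks_one]
  map_mul' p q := by simp [Matrix.fromBlocks_multiply]
  map_zero' := by simp [← Matrix.fromBlocks_zero]
  map_add' p q := by simp [Matrix.fromBlocks_add]

lemma exp_blockHom (A : Matrix (Fin m) (Fin m) ℂ) (B : Matrix (Fin n) (Fin n) ℂ) :
    exp (Matrix.fromBlocks A 0 0 B) = Matrix.fromBlocks (exp A) 0 0 (exp B) := by
  letI : SeminormedRing (Matrix (Fin m) (Fin m) ℂ) := Matrix.linftyOpSemiNormedRing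
  letI : NormedRing (Matrix (Fin m) (Fin m) ℂ) := Matrix.linftyOpNormedRing
  letI : NormedAlgebra ℂ (Matrix (Fin m) (Fin m) ℂ) := Matrix.linftyOpNormedAlgebra
  letI : SeminormedRing (Matrix (Fin n) (Fin n) ℂ) := Matrix.linftyOpSemiNormedRing
  letI : NormedRing (Matrix (Fin n) (Fin n) ℂ) := Matrix.linftyOpNormedRing
  letI : NormedAlgebra ℂ (Matrix (Fin n) (Fin n) ℂ) := Matrix.linftyOpNormedAlgebra
  letI : NormedAlgebra ℚ (Matrix (Fin m) (Fin m) ℂ) := NormedAlgebra.restrictScalars ℚ ℂ _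
  letI : NormedAlgebra ℚ (Matrix (Fin n) (Fin n) ℂ) := NormedAlgebra.restrictScalars ℚ ℂ _
  letI : SeminormedRing (Matrix (Fin m ⊕ Fin n) (Fin m ⊕ Fin n) ℂ) :=
    Matrix.linftyOpSemiNormedRing
  letI : NormedRing (Matrix (Fin m ⊕ Fin n) (Fin m ⊕ Fin n) ℂ) := Matrix.linftyOpNormedRing
  letI : NormedAlgebra ℂ (Matrix (Fin m ⊕ Fin n) (Fin m ⊕ Fin n) ℂ) :=
    Matrix.linftyOpNormedAlgebra
  have hc : Continuous (blockHom m n) := by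
    apply continuous_matrix
    rintro (i | i) (j | j)
    · exact (continuous_apply_apply i j).comp continuous_fst
    · exact continuous_const
    · exact continuous_const
    · exact (continuous_apply_apply i j).comp continuous_snd
  have h : Matrix.fromBlocks A 0 0 B = blockHom m n (A, B) := rfl
  rw [h]
  have hexp : exp ((A, B) : _ × _) = (exp A, exp B) :=
    Prod.ext (Prod.fst_exp _) (Prod.snd_exp _)
  exact (map_exp (blockHom m n) hc (A, B)).symm.trans ((congrArg (blockHom m n) hexp).trans rfl)

end BlockDiag
noncomputable def onesC (p q : ℕ) : Matrix (Fin p) (Fin q) ℂ := Matrix.of fun _ _ => 1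

@[simp] lemma onesC_apply (p q : ℕ) (i : Fin p) (j : Fin q) : onesC p q i j = 1 := rfl

lemma rowsum_mul_onesC {p q r : ℕ} {P : Matrix (Fin p) (Fin q) ℂ} {s : ℂ}
    (h : ∀ i, ∑ j, P i j = s) : P * onesC q r = s • onesC p r := by
  ext i j
  simp [Matrix.mul_apply, h i]

lemma onesC_mul_colsum {p q r : ℕ} {P : Matrix (Fin q) (Fin r) ℂ} {s : ℂ}
    (h : ∀ j, ∑ i, P i j = s) : onesC p q * P = s • onesC p r := by
  ext i j
  simp [Matrix.mul_apply, h j]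

lemma onesC_mul_onesC (p q r : ℕ) : onesC p q * onesC q r = (q : ℂ) • onesC p r :=
  rowsum_mul_onesC (by simp)

@[simp] lemma onesC_transpose (p q : ℕ) : (onesC p q)ᵀ = onesC q p := by
  ext i j; rfl

set_option maxHeartbeats 1000000 in
lemma deltaFormula (m n : ℕ) (hm : 1 ≤ m) (hn : 1 ≤ n) (k ℓ a b : ℝ)
    (AX : Matrix (Fin m) (Fin m) ℝ) (AY : Matrix (Fin n) (Fin n) ℝ)
    (hAXsymm : AX.IsSymm) (hAXrow : ∀ i, ∑ j, AX i j = k)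
    (hAYsymm : AY.IsSymm) (hAYrow : ∀ i, ∑ j, AY i j = ℓ)
    (ha : 0 < a) (hb : 0 < b) (hab : a * b = (m : ℝ) * n) (hkl : ℓ = k - a + b)
    (t : ℝ) (u v : Fin m) :
    transU (joinA m n AX AY) t (Sum.inl u) (Sum.inl v) - transU AX t u v =
      ((a:ℂ) * Complex.exp (Complex.I * (t:ℂ) * ((k:ℂ) + (b:ℂ)))
          + (b:ℂ) * Complex.exp (Complex.I * (t:ℂ) * ((k:ℂ) - (a:ℂ))))
        / ((m:ℂ) * ((a:ℂ) + (b:ℂ))) - Complex.exp (Complex.I * (t:ℂ) * (k:ℂ)) / (m:ℂ) := by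
  have hm0 : ((m:ℕ) : ℂ) ≠ 0 := Nat.cast_ne_zero.mpr (by omega)
  have hn0 : ((n:ℕ) : ℂ) ≠ 0 := Nat.cast_ne_zero.mpr (by omega)
  have hd0 : (a : ℂ) + (b : ℂ) ≠ 0 := by
    rw [← Complex.ofReal_add]
    exact_mod_cast ne_of_gt (by positivity : (0:ℝ) < a + b)
  have habC : (a : ℂ) * (b : ℂ) = (m : ℂ) * (n : ℂ) := by exact_mod_cast hab
  have hklC : (ℓ : ℂ) = (k : ℂ) - a + b := by exact_mod_cast hkl
  set c : ℂ := Complex.I * (t : ℂ) with hc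
  set AXc := AX.map (fun x : ℝ => (x : ℂ)) with hAXcd
  set AYc := AY.map (fun x : ℝ => (x : ℂ)) with hAYcd
  have hrX : ∀ i, ∑ j, AXc i j = (k : ℂ) := fun i => by
    rw [hAXcd]; simp only [Matrix.map_apply, ← Complex.ofReal_sum, hAXrow i]
  have hcX : ∀ j, ∑ i, AXc i j = (k : ℂ) := fun j => by
    have : ∀ i, AXc i j = AXc j i := fun i => by
      rw [hAXcd]; simp only [Matrix.map_apply]; rw [hAXsymm.apply]
    rw [Finset.sum_congr rfl fun i _ => this i]
    exact hrX j
  have hrY : ∀ i, ∑ j, AYc i j = (ℓ : ℂ) := fun i => by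
    rw [hAYcd]; simp only [Matrix.map_apply, ← Complex.ofReal_sum, hAYrow i]
  have hcY : ∀ j, ∑ i, AYc i j = (ℓ : ℂ) := fun j => by
    have : ∀ i, AYc i j = AYc j i := fun i => by
      rw [hAYcd]; simp only [Matrix.map_apply]; rw [hAYsymm.apply]
    rw [Finset.sum_congr rfl fun i _ => this i]
    exact hrY j
  -- basic products
  have hXJ : AXc * onesC m m = (k:ℂ) • onesC m m := rowsum_mul_onesC hrX
  have hJX : onesC m m * AXc = (k:ℂ) • onesC m m := onesC_mul_colsum hcX
  have hXJmn : AXc * onesC m n = (k:ℂ) • onesC m n := rowsum_mul_onesC hrX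
  have hJnmX : onesC n m * AXc = (k:ℂ) • onesC n m := onesC_mul_colsum hcX
  have hYJ : AYc * onesC n n = (ℓ:ℂ) • onesC n n := rowsum_mul_onesC hrY
  have hJY : onesC n n * AYc = (ℓ:ℂ) • onesC n n := onesC_mul_colsum hcY
  have hYJnm : AYc * onesC n m = (ℓ:ℂ) • onesC n m := rowsum_mul_onesC hrY
  have hJmnY : onesC m n * AYc = (ℓ:ℂ) • onesC m n := onesC_mul_colsum hcY
  -- pieces
  set GX := AXc - ((k:ℂ)/(m:ℂ)) • onesC m m with hGXd
  set GY := AYc - ((ℓ:ℂ)/(n:ℂ)) • onesC n n with hGYd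
  set Qm : Matrix (Fin m) (Fin m) ℂ := ((m:ℂ))⁻¹ • onesC m m with hQmd
  set S := Matrix.fromBlocks GX 0 0 GY with hSd
  set Tm := Matrix.fromBlocks (((k:ℂ)/(m:ℂ)) • onesC m m) (onesC m n) (onesC n m)
    (((ℓ:ℂ)/(n:ℂ)) • onesC n n) with hTd
  set Mp := Matrix.fromBlocks (((a:ℂ)/(m:ℂ)) • onesC m m) (onesC m n) (onesC n m)
    (((b:ℂ)/(n:ℂ)) • onesC n n) with hMpd
  set Mm := Matrix.fromBlocks (((b:ℂ)/(m:ℂ)) • onesC m m) (-onesC m n) (-onesC n m)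
    (((a:ℂ)/(n:ℂ)) • onesC n n) with hMmd
  -- G kills ones
  have hGXJ : GX * onesC m m = 0 := by
    rw [hGXd, Matrix.sub_mul, Matrix.smul_mul, hXJ, onesC_mul_onesC, smul_smul]
    rw [show (k:ℂ)/(m:ℂ) * (m:ℂ) = (k:ℂ) from by field_simp]
    exact sub_self _
  have hGXJmn : GX * onesC m n = 0 := by
    rw [hGXd, Matrix.sub_mul, Matrix.smul_mul, hXJmn, onesC_mul_onesC, smul_smul]
    rw [show (k:ℂ)/(m:ℂ) * (m:ℂ) = (k:ℂ) from by field_simp]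
    exact sub_self _
  have hJGX : onesC m m * GX = 0 := by
    rw [hGXd, Matrix.mul_sub, Matrix.mul_smul, hJX, onesC_mul_onesC, smul_smul]
    rw [show (k:ℂ)/(m:ℂ) * (m:ℂ) = (k:ℂ) from by field_simp]
    exact sub_self _
  have hJnmGX : onesC n m * GX = 0 := by
    rw [hGXd, Matrix.mul_sub, Matrix.mul_smul, hJnmX, onesC_mul_onesC, smul_smul]
    rw [show (k:ℂ)/(m:ℂ) * (m:ℂ) = (k:ℂ) from by field_simp]
    exact sub_self _
  have hGYJ : GY * onesC n n = 0 := by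
    rw [hGYd, Matrix.sub_mul, Matrix.smul_mul, hYJ, onesC_mul_onesC, smul_smul]
    rw [show (ℓ:ℂ)/(n:ℂ) * (n:ℂ) = (ℓ:ℂ) from by field_simp]
    exact sub_self _
  have hGYJnm : GY * onesC n m = 0 := by
    rw [hGYd, Matrix.sub_mul, Matrix.smul_mul, hYJnm, onesC_mul_onesC, smul_smul]
    rw [show (ℓ:ℂ)/(n:ℂ) * (n:ℂ) = (ℓ:ℂ) from by field_simp]
    exact sub_self _
  have hJGY : onesC n n * GY = 0 := by
    rw [hGYd, Matrix.mul_sub, Matrix.mul_smul, hJY, onesC_mul_onesC, smul_smul]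
    rw [show (ℓ:ℂ)/(n:ℂ) * (n:ℂ) = (ℓ:ℂ) from by field_simp]
    exact sub_self _
  have hJmnGY : onesC m n * GY = 0 := by
    rw [hGYd, Matrix.mul_sub, Matrix.mul_smul, hJmnY, onesC_mul_onesC, smul_smul]
    rw [show (ℓ:ℂ)/(n:ℂ) * (n:ℂ) = (ℓ:ℂ) from by field_simp]
    exact sub_self _
  -- S, T orthogonal
  have hST : S * Tm = 0 := by
    rw [hSd, hTd, Matrix.fromBlocks_multiply, ← Matrix.fromBlocks_zero]
    refine Matrix.fromBlocks_inj.mpr ⟨?_, ?_, ?_, ?_⟩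
    · rw [Matrix.zero_mul, add_zero, Matrix.mul_smul, hGXJ, smul_zero]
    · rw [Matrix.zero_mul, add_zero, hGXJmn]
    · rw [Matrix.zero_mul, zero_add, hGYJnm]
    · rw [Matrix.zero_mul, zero_add, Matrix.mul_smul, hGYJ, smul_zero]
  have hTS : Tm * S = 0 := by
    rw [hSd, hTd, Matrix.fromBlocks_multiply, ← Matrix.fromBlocks_zero]
    refine Matrix.fromBlocks_inj.mpr ⟨?_, ?_, ?_, ?_⟩
    · rw [Matrix.mul_zero, add_zero, Matrix.smul_mul, hJGX, smul_zero]
    · rw [Matrix.mul_zero, zero_add, hJmnGY]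
    · rw [Matrix.mul_zero, add_zero, hJnmGX]
    · rw [Matrix.mul_zero, zero_add, Matrix.smul_mul, hJGY, smul_zero]
  -- M products
  have hMpT : Mpᵀ = Mp := by
    rw [hMpd]
    simp [Matrix.fromBlocks_transpose, Matrix.transpose_smul]
  have hMmT : Mmᵀ = Mm := by
    rw [hMmd]
    simp [Matrix.fromBlocks_transpose, Matrix.transpose_smul]
  have hMpMp : Mp * Mp = ((a:ℂ) + (b:ℂ)) • Mp := by
    rw [hMpd]
    ext i j
    rcases i with i | i <;> rcases j with j | j <;>
      simp [Matrix.mul_apply, Fintype.sum_sum_type, Finset.sum_const, Finset.card_univ,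
        Matrix.fromBlocks_smul]
    all_goals field_simp
    all_goals
      first
        | (ring1)
        | (linear_combination (-(m:ℂ)^2) * habC; done)
        | (linear_combination (-(n:ℂ)^2) * habC; done)
        | (linear_combination (-(m:ℂ)) * habC; done)
        | (linear_combination (-(n:ℂ)) * habC; done)
        | (linear_combination (m:ℂ) * habC; done)
        | (linear_combination (n:ℂ) * habC; done)
        | (linear_combination (m:ℂ)^2 * habC; done)
        | (linear_combination (n:ℂ)^2 * habC; done)
        | (linear_combination habC; done)
        | (linear_combination -habC; done)
  have hMmMm : Mm * Mm = ((a:ℂ) + (b:ℂ)) • Mm := by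
    rw [hMmd]
    ext i j
    rcases i with i | i <;> rcases j with j | j <;>
      simp [Matrix.mul_apply, Fintype.sum_sum_type, Finset.sum_const, Finset.card_univ,
        Matrix.fromBlocks_smul]
    all_goals field_simp
    all_goals
      first
        | (ring1)
        | (linear_combination (-(m:ℂ)^2) * habC; done)
        | (linear_combination (-(n:ℂ)^2) * habC; done)
        | (linear_combination (-(m:ℂ)) * habC; done)
        | (linear_combination (-(n:ℂ)) * habC; done)
        | (linear_combination (m:ℂ) * habC; done)
        | (linear_combination (n:ℂ) * habC; done)
        | (linear_combination (m:ℂ)^2 * habC; done)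
        | (linear_combination (n:ℂ)^2 * habC; done)
        | (linear_combination habC; done)
        | (linear_combination -habC; done)
  have hMpMm : Mp * Mm = 0 := by
    rw [hMpd, hMmd]
    ext i j
    rcases i with i | i <;> rcases j with j | j <;>
      simp [Matrix.mul_apply, Fintype.sum_sum_type, Finset.sum_const, Finset.card_univ]
    all_goals field_simp
    all_goals
      first
        | (ring1)
        | (linear_combination (-(m:ℂ)^2) * habC; done)
        | (linear_combination (-(n:ℂ)^2) * habC; done)
        | (linear_combination (-(m:ℂ)) * habC; done)
        | (linear_combination (-(n:ℂ)) * habC; done)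
        | (linear_combination (m:ℂ) * habC; done)
        | (linear_combination (n:ℂ) * habC; done)
        | (linear_combination (m:ℂ)^2 * habC; done)
        | (linear_combination (n:ℂ)^2 * habC; done)
        | (linear_combination habC; done)
        | (linear_combination -habC; done)
  have hTdec : ((a:ℂ) + (b:ℂ)) • Tm = ((k:ℂ) + (b:ℂ)) • Mp + ((k:ℂ) - (a:ℂ)) • Mm := by
    rw [hTd, hMpd, hMmd, Matrix.fromBlocks_smul, Matrix.fromBlocks_smul, Matrix.fromBlocks_smul,
      Matrix.fromBlocks_add]
    refine Matrix.fromBlocks_inj.mpr ⟨?_, ?_, ?_, ?_⟩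
    · rw [smul_smul, smul_smul, smul_smul, ← add_smul]
      congr 1
      field_simp
      ring
    · rw [smul_neg, ← neg_smul, ← add_smul]
      congr 1
      ring
    · rw [smul_neg, ← neg_smul, ← add_smul]
      congr 1
      ring
    · rw [smul_smul, smul_smul, smul_smul, ← add_smul]
      congr 1
      field_simp
      linear_combination ((a:ℂ)+(b:ℂ)) * hklC
  have hMmMp : Mm * Mp = 0 := by
    have h := congrArg Matrix.transpose hMpMm
    rw [Matrix.transpose_mul, hMpT, hMmT, Matrix.transpose_zero] at h
    exact h
  -- projections
  set Pp := (((a:ℂ) + (b:ℂ))⁻¹) • Mp with hPpd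
  set Pm := (((a:ℂ) + (b:ℂ))⁻¹) • Mm with hPmd
  have hPpPp : Pp * Pp = Pp := by
    rw [hPpd, Matrix.smul_mul, Matrix.mul_smul, hMpMp, smul_smul, smul_smul]
    congr 1
    field_simp
  have hPmPm : Pm * Pm = Pm := by
    rw [hPmd, Matrix.smul_mul, Matrix.mul_smul, hMmMm, smul_smul, smul_smul]
    congr 1
    field_simp
  have hPpPm : Pp * Pm = 0 := by
    rw [hPpd, hPmd, Matrix.smul_mul, Matrix.mul_smul, hMpMm, smul_zero, smul_zero]
  have hPmPp : Pm * Pp = 0 := by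
    rw [hPpd, hPmd, Matrix.smul_mul, Matrix.mul_smul, hMmMp, smul_zero, smul_zero]
  have hTPp : Tm = ((k:ℂ) + (b:ℂ)) • Pp + ((k:ℂ) - (a:ℂ)) • Pm := by
    have h1 : Tm = (((a:ℂ) + (b:ℂ))⁻¹) • (((a:ℂ) + (b:ℂ)) • Tm) := by
      rw [smul_smul, inv_mul_cancel₀ hd0, one_smul]
    rw [h1, hTdec, hPpd, hPmd]
    module
  -- Qm facts
  have hQmQm : Qm * Qm = Qm := by
    rw [hQmd, Matrix.smul_mul, Matrix.mul_smul, onesC_mul_onesC, smul_smul, smul_smul]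
    congr 1
    field_simp
  have hGXQ : GX * Qm = 0 := by rw [hQmd, Matrix.mul_smul, hGXJ, smul_zero]
  have hQGX : Qm * GX = 0 := by rw [hQmd, Matrix.smul_mul, hJGX, smul_zero]
  have hsplitX : c • AXc = c • GX + (c * (k:ℂ)) • Qm := by
    rw [hGXd, hQmd, smul_sub, smul_smul, smul_smul,
      show c * ((k:ℂ)/(m:ℂ)) = c * (k:ℂ) * ((m:ℂ))⁻¹ from by ring]
    exact (sub_add_cancel _ _).symm
  have hcomm1 : Commute (c • GX) ((c * (k:ℂ)) • Qm) := by
    show _ = _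
    rw [smul_mul_smul_comm, hGXQ, smul_mul_smul_comm, hQGX, smul_zero, smul_zero]
  have hAQ : AXc * Qm = Qm * AXc := by
    rw [hQmd, Matrix.mul_smul, Matrix.smul_mul, hXJ, hJX]
  have hcomm2 : Commute (c • AXc) ((-(c * (k:ℂ))) • Qm) := by
    show _ = _
    rw [smul_mul_smul_comm, smul_mul_smul_comm, hAQ, mul_comm]
  have hexpQ : ∀ z : ℂ, exp (z • Qm) = Complex.exp z • Qm + (1 - Qm) := fun z =>
    mexp_smul_idem Qm hQmQm z
  have hexpAXc_mul : exp (c • AXc) * Qm = Complex.exp (c * (k:ℂ)) • Qm := by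
    rw [hsplitX, Matrix.exp_add_of_commute _ _ hcomm1, mul_assoc, hexpQ, Matrix.add_mul,
      Matrix.smul_mul, hQmQm, Matrix.sub_mul, Matrix.one_mul, hQmQm, sub_self, add_zero,
      Matrix.mul_smul,
      mexp_mul (show (c • GX) * Qm = 0 by rw [Matrix.smul_mul, hGXQ, smul_zero])]
  have hsplitX' : c • GX = c • AXc + (-(c * (k:ℂ))) • Qm := by
    rw [hsplitX, add_assoc, ← add_smul, add_neg_cancel, zero_smul, add_zero]
  have hexpGX : exp (c • GX) = exp (c • AXc) + (1 - Complex.exp (c * (k:ℂ))) • Qm := by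
    rw [hsplitX', Matrix.exp_add_of_commute _ _ hcomm2, hexpQ, Matrix.mul_add, Matrix.mul_sub,
      Matrix.mul_one, Matrix.mul_smul, hexpAXc_mul, smul_smul, ← Complex.exp_add,
      neg_add_cancel, Complex.exp_zero, one_smul, sub_smul, one_smul]
    abel
  -- exp of S
  have hcS : c • S = Matrix.fromBlocks (c • GX) 0 0 (c • GY) := by
    rw [hSd, Matrix.fromBlocks_smul, smul_zero, smul_zero]
  have hexpS : exp (c • S) = Matrix.fromBlocks (exp (c • GX)) 0 0 (exp (c • GY)) := by
    rw [hcS]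
    exact exp_blockHom _ _
  -- exp of T
  have hcT : c • Tm = (c * ((k:ℂ) + (b:ℂ))) • Pp + (c * ((k:ℂ) - (a:ℂ))) • Pm := by
    rw [hTPp]
    module
  have horth1 : ((c * ((k:ℂ) + (b:ℂ))) • Pp) * ((c * ((k:ℂ) - (a:ℂ))) • Pm) = 0 := by
    rw [smul_mul_smul_comm, hPpPm, smul_zero]
  have horth2 : ((c * ((k:ℂ) - (a:ℂ))) • Pm) * ((c * ((k:ℂ) + (b:ℂ))) • Pp) = 0 := by
    rw [smul_mul_smul_comm, hPmPp, smul_zero]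
  have hexpT : exp (c • Tm) =
      Complex.exp (c * ((k:ℂ) + (b:ℂ))) • Pp + (1 - Pp) +
        (Complex.exp (c * ((k:ℂ) - (a:ℂ))) • Pm + (1 - Pm)) - 1 := by
    rw [hcT, mexp_add horth1 horth2, mexp_smul_idem Pp hPpPp, mexp_smul_idem Pm hPmPm]
  -- join matrix decomposition
  have hBmap : (joinA m n AX AY).map (fun x : ℝ => (x : ℂ)) = S + Tm := by
    rw [joinA, Matrix.fromBlocks_map, hSd, hTd, Matrix.fromBlocks_add]
    refine Matrix.fromBlocks_inj.mpr ⟨?_, ?_, ?_, ?_⟩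
    · rw [← hAXcd, hGXd]
      exact (sub_add_cancel _ _).symm
    · rw [zero_add]
      ext i j
      simp [onesC]
    · rw [zero_add]
      ext i j
      simp [onesC]
    · rw [← hAYcd, hGYd]
      exact (sub_add_cancel _ _).symm
  have hcST' : (c • S) * (c • Tm) = 0 := by rw [smul_mul_smul_comm, hST, smul_zero]
  have hcTS' : (c • Tm) * (c • S) = 0 := by rw [smul_mul_smul_comm, hTS, smul_zero]
  have hUjoin : transU (joinA m n AX AY) t = exp (c • S) + exp (c • Tm) - 1 := by
    rw [transU, ← hc, hBmap, smul_add]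
    exact mexp_add hcST' hcTS'
  have hUX : transU AX t = exp (c • AXc) := by rw [transU, ← hc, ← hAXcd]
  have hEntry : transU (joinA m n AX AY) t (Sum.inl u) (Sum.inl v) - transU AX t u v =
      ((a:ℂ) * Complex.exp (c * ((k:ℂ) + (b:ℂ))) + (b:ℂ) * Complex.exp (c * ((k:ℂ) - (a:ℂ))))
        / ((m:ℂ) * ((a:ℂ) + (b:ℂ))) - Complex.exp (c * (k:ℂ)) / (m:ℂ) := by
    rw [hUjoin, hUX, Matrix.sub_apply, Matrix.add_apply, hexpS, hexpT, hexpGX, hPpd, hPmd, hQmd,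
      hMpd, hMmd]
    simp only [Matrix.add_apply, Matrix.sub_apply, Matrix.smul_apply, Matrix.one_apply,
      Matrix.fromBlocks_apply₁₁, onesC_apply, smul_eq_mul, Matrix.fromBlocks_smul, Sum.inl.injEq]
    rcases eq_or_ne u v with rfl | huv
    · rw [if_pos rfl]
      field_simp
      ring
    · rw [if_neg huv]
      field_simp
      ring
  exact hEntry

end Aux

lemma complexTriangle (rp rm r0 : ℝ) (hrp : 0 < rp) (hrm : 0 < rm) (hr0 : 0 < r0)
    (hsum : rp + rm = r0) (Ep Em E0 : ℂ) (hEp : ‖Ep‖ = 1) (hEm : ‖Em‖ = 1)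
    (hE0 : ‖E0‖ = 1) :
    ‖(rp:ℂ)*Ep + (rm:ℂ)*Em - (r0:ℂ)*E0‖ ≤ 2*r0 ∧
    (‖(rp:ℂ)*Ep + (rm:ℂ)*Em - (r0:ℂ)*E0‖ = 2*r0 ↔ (Ep = Em ∧ Em = -E0)) ∧
    ((Ep = Em ∧ Em = -E0) → (rp:ℂ)*Ep + (rm:ℂ)*Em - (r0:ℂ)*E0 = -2*(r0:ℂ)*E0) := by
  have hnp : ‖(rp:ℂ)*Ep‖ = rp := by
    rw [norm_mul, Complex.norm_real, Real.norm_eq_abs, abs_of_pos hrp, hEp,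
      mul_one]
  have hnm : ‖(rm:ℂ)*Em‖ = rm := by
    rw [norm_mul, Complex.norm_real, Real.norm_eq_abs, abs_of_pos hrm, hEm,
      mul_one]
  have hn0 : ‖(r0:ℂ)*E0‖ = r0 := by
    rw [norm_mul, Complex.norm_real, Real.norm_eq_abs, abs_of_pos hr0, hE0,
      mul_one]
  set w : ℂ := (rp:ℂ)*Ep + (rm:ℂ)*Em with hwd
  have hw : ‖w‖ ≤ r0 := by
    calc ‖w‖ ≤ ‖(rp:ℂ)*Ep‖ + ‖(rm:ℂ)*Em‖ := norm_add_le _ _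
    _ = r0 := by rw [hnp, hnm, hsum]
  have habs : ‖w - (r0:ℂ)*E0‖ = ‖w - (r0:ℂ)*E0‖ := rfl
  have himp : (Ep = Em ∧ Em = -E0) → (rp:ℂ)*Ep + (rm:ℂ)*Em - (r0:ℂ)*E0 = -2*(r0:ℂ)*E0 := by
    rintro ⟨h1, h2⟩
    rw [hwd] at *
    rw [h1, h2]
    have : ((rp:ℂ) + rm) = (r0:ℂ) := by exact_mod_cast congrArg (fun x : ℝ => (x:ℂ)) hsum
    linear_combination (-E0) * this
  refine ⟨?_, ⟨?_, ?_⟩, himp⟩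
  · rw [habs]
    calc ‖w - (r0:ℂ)*E0‖ ≤ ‖w‖ + ‖(r0:ℂ)*E0‖ := norm_sub_le _ _
    _ ≤ r0 + r0 := by rw [hn0]; exact add_le_add_left hw _
    _ = 2*r0 := by ring
  · intro h
    rw [habs] at h
    have hw_ge : r0 ≤ ‖w‖ := by
      have h2 := norm_sub_le w ((r0:ℂ)*E0)
      rw [h, hn0] at h2
      linarith
    have hw_eq : ‖w‖ = r0 := le_antisymm hw hw_ge
    have hadd : ‖w + (-((r0:ℂ)*E0))‖ = ‖w‖ + ‖-((r0:ℂ)*E0)‖ := by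
      rw [← sub_eq_add_neg, h, norm_neg, hn0, hw_eq]
      ring
    have heq1 : w = -((r0:ℂ)*E0) :=
      eq_of_norm_eq_of_norm_add_eq (by rw [hw_eq, norm_neg, hn0]) hadd
    have hadd2 : ‖(rp:ℂ)*Ep + (rm:ℂ)*Em‖ = ‖(rp:ℂ)*Ep‖ + ‖(rm:ℂ)*Em‖ := by
      rw [hnp, hnm, ← hwd, hw_eq, hsum]
    have hray2 : SameRay ℝ ((rp:ℂ)*Ep) ((rm:ℂ)*Em) := sameRay_iff_norm_add.mpr hadd2
    have hpne : (rp:ℂ)*Ep ≠ 0 := by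
      intro h0
      rw [h0] at hnp
      simp at hnp
      linarith
    have hmne : (rm:ℂ)*Em ≠ 0 := by
      intro h0
      rw [h0] at hnm
      simp at hnm
      linarith
    obtain ⟨x, y, hx, hy, hxy⟩ := hray2.exists_pos hpne hmne
    rw [Complex.real_smul, Complex.real_smul] at hxy
    have hnorm_xy : x * rp = y * rm := by
      have := congrArg norm hxy
      rw [norm_mul, norm_mul, norm_mul, norm_mul] at this
      simp only [Complex.norm_real, Real.norm_eq_abs, hEp, hEm] at this
      rw [abs_of_pos hx, abs_of_pos hy, abs_of_pos hrp, abs_of_pos hrm] at this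
      simpa using this
    have hEpEm : Ep = Em := by
      have h1 : ((x*rp : ℝ) : ℂ) * Ep = ((y*rm : ℝ) : ℂ) * Em := by
        push_cast
        linear_combination hxy
      rw [show ((y*rm : ℝ) : ℂ) = ((x*rp : ℝ) : ℂ) by exact_mod_cast hnorm_xy.symm] at h1
      have hne : ((x*rp : ℝ) : ℂ) ≠ 0 := by
        exact_mod_cast ne_of_gt (mul_pos hx hrp)
      exact mul_left_cancel₀ hne h1
    refine ⟨hEpEm, ?_⟩
    have hr0C : ((rp:ℂ) + rm) = (r0:ℂ) := by exact_mod_cast congrArg (fun x : ℝ => (x:ℂ)) hsum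
    have h2 : (r0:ℂ) * Em = -((r0:ℂ)*E0) := by
      rw [hwd, hEpEm] at heq1
      linear_combination heq1 - Em * hr0C
    have hr0ne : (r0:ℂ) ≠ 0 := by exact_mod_cast ne_of_gt hr0
    have := mul_left_cancel₀ hr0ne (h2.trans (by ring_nf : -((r0:ℂ)*E0) = (r0:ℂ) * (-E0)))
    exact this
  · rintro ⟨h1, h2⟩
    rw [hwd, himp ⟨h1, h2⟩, norm_mul, norm_mul]
    simp [hE0, Complex.norm_real, abs_of_pos hr0]


theorem stmt19 (m n : ℕ) (hm : 1 ≤ m) (hn : 1 ≤ n) (k ℓ : ℝ)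
    (AX : Matrix (Fin m) (Fin m) ℝ) (AY : Matrix (Fin n) (Fin n) ℝ)
    (hAXsymm : AX.IsSymm) (hAXnonneg : ∀ i j, 0 ≤ AX i j) (hAXrow : ∀ i, ∑ j, AX i j = k)
    (hAYsymm : AY.IsSymm) (hAYnonneg : ∀ i j, 0 ≤ AY i j) (hAYrow : ∀ i, ∑ j, AY i j = ℓ)
    (D lamPlus lamMinus : ℝ)
    (hD : D = (k - ℓ) ^ 2 + 4 * m * n)
    (hPlus : lamPlus = (k + ℓ + Real.sqrt D) / 2)
    (hMinus : lamMinus = (k + ℓ - Real.sqrt D) / 2) :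
    ∀ u v : Fin m,
      (∀ t : ℝ,
        ‖transU (joinA m n AX AY) t (Sum.inl u) (Sum.inl v)
            - transU AX t u v‖ ≤ 2 / m) ∧
      (∀ τ : ℝ,
        (‖transU (joinA m n AX AY) τ (Sum.inl u) (Sum.inl v)
              - transU AX τ u v‖ = 2 / m ↔
          (Complex.exp (Complex.I * (τ : ℂ) * (lamPlus : ℂ)) =
              Complex.exp (Complex.I * (τ : ℂ) * (lamMinus : ℂ)) ∧
            Complex.exp (Complex.I * (τ : ℂ) * (lamMinus : ℂ)) =
              -Complex.exp (Complex.I * (τ : ℂ) * (k : ℂ)))) ∧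
        ((Complex.exp (Complex.I * (τ : ℂ) * (lamPlus : ℂ)) =
              Complex.exp (Complex.I * (τ : ℂ) * (lamMinus : ℂ)) ∧
            Complex.exp (Complex.I * (τ : ℂ) * (lamMinus : ℂ)) =
              -Complex.exp (Complex.I * (τ : ℂ) * (k : ℂ))) →
          transU (joinA m n AX AY) τ (Sum.inl u) (Sum.inl v) - transU AX τ u v =
            -2 * Complex.exp (Complex.I * (τ : ℂ) * (k : ℂ)) / (m : ℂ))) := by
  have hmR : (0:ℝ) < m := by exact_mod_cast hm
  have hnR : (0:ℝ) < n := by exact_mod_cast hn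
  have hmn1 : (1:ℝ) ≤ (m:ℝ) * n := by
    have h1 : (1:ℝ) ≤ (m:ℝ) := by exact_mod_cast hm
    have h2 : (1:ℝ) ≤ (n:ℝ) := by exact_mod_cast hn
    nlinarith
  have hD0 : 0 < D := by rw [hD]; nlinarith [sq_nonneg (k - ℓ)]
  set s := Real.sqrt D with hsd
  have hs0 : 0 < s := Real.sqrt_pos.mpr hD0
  have hs2 : s ^ 2 = D := Real.sq_sqrt hD0.le
  have hsql : (k - ℓ) ^ 2 < s ^ 2 := by rw [hs2, hD]; nlinarith
  have habs : |k - ℓ| < s := by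
    have h1 : |k - ℓ| = Real.sqrt ((k - ℓ) ^ 2) := (Real.sqrt_sq_eq_abs _).symm
    rw [h1, ← Real.sqrt_sq hs0.le]
    exact Real.sqrt_lt_sqrt (sq_nonneg _) hsql
  have habs' := abs_lt.mp habs
  set a := (k - ℓ + s) / 2 with had
  set b := (s - (k - ℓ)) / 2 with hbd
  have ha : 0 < a := by rw [had]; linarith [habs'.1]
  have hb : 0 < b := by rw [hbd]; linarith [habs'.2]
  have hab : a * b = (m:ℝ) * n := by
    rw [had, hbd]
    linear_combination (1/4 : ℝ) * hs2 + (1/4 : ℝ) * hD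
  have hkl : ℓ = k - a + b := by rw [had, hbd]; ring
  have hlp : lamPlus = k + b := by rw [hPlus, hbd]; ring
  have hlm : lamMinus = k - a := by rw [hMinus, had]; ring
  have hab0 : (0:ℝ) < a + b := by linarith
  have hmC : ((m:ℕ) : ℂ) ≠ 0 := Nat.cast_ne_zero.mpr (by omega)
  have habC : (a : ℂ) + (b : ℂ) ≠ 0 := by
    rw [← Complex.ofReal_add]
    exact_mod_cast ne_of_gt hab0
  intro u v
  set rp := a / ((m:ℝ) * (a + b)) with hrpd
  set rm := b / ((m:ℝ) * (a + b)) with hrmd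
  have hrp0 : 0 < rp := div_pos ha (mul_pos hmR hab0)
  have hrm0 : 0 < rm := div_pos hb (mul_pos hmR hab0)
  have hr00 : (0:ℝ) < 1 / m := by positivity
  have hsum : rp + rm = 1 / m := by
    rw [hrpd, hrmd]
    field_simp
  have key : ∀ τ : ℝ,
      transU (joinA m n AX AY) τ (Sum.inl u) (Sum.inl v) - transU AX τ u v =
        ((rp:ℝ) : ℂ) * Complex.exp (Complex.I * (τ:ℂ) * (lamPlus : ℂ)) +
          ((rm:ℝ) : ℂ) * Complex.exp (Complex.I * (τ:ℂ) * (lamMinus : ℂ)) -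
          ((1 / m : ℝ) : ℂ) * Complex.exp (Complex.I * (τ:ℂ) * (k : ℂ)) := by
    intro τ
    rw [deltaFormula m n hm hn k ℓ a b AX AY hAXsymm hAXrow hAYsymm hAYrow ha hb hab hkl τ u v,
      show ((k:ℂ) + (b:ℂ)) = ((lamPlus : ℝ) : ℂ) by rw [hlp]; push_cast; ring,
      show ((k:ℂ) - (a:ℂ)) = ((lamMinus : ℝ) : ℂ) by rw [hlm]; push_cast; ring,
      hrpd, hrmd]
    push_cast
    field_simp
    try ring
  have habsE : ∀ (τ lam : ℝ), ‖Complex.exp (Complex.I * (τ:ℂ) * (lam:ℂ))‖ = 1 := by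
    intro τ lam
    rw [show Complex.I * (τ:ℂ) * (lam:ℂ) = ((τ * lam : ℝ) : ℂ) * Complex.I by push_cast; ring]
    exact Complex.norm_exp_ofReal_mul_I _
  refine ⟨?_, ?_⟩
  · intro t
    rw [key t]
    have H := complexTriangle rp rm (1/m) hrp0 hrm0 hr00 hsum _ _ _
      (habsE t lamPlus) (habsE t lamMinus) (habsE t k)
    calc ‖_‖ ≤ 2 * (1/m) := H.1
    _ = 2 / m := by ring
  · intro τ
    have H := complexTriangle rp rm (1/m) hrp0 hrm0 hr00 hsum _ _ _
      (habsE τ lamPlus) (habsE τ lamMinus) (habsE τ k)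
    constructor
    · rw [key τ, show (2:ℝ) / m = 2 * (1/m) by ring]
      exact H.2.1
    · intro hyp
      rw [key τ, H.2.2 hyp]
      push_cast
      ring
end
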